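/- Let A ∈ ℝ^{n×n}. Suppose: (i) 𝒰_d ∈ ℝ^{n×d} has orthonormal columns and ℋ_d := 𝒰_d^T A 𝒰_d; (ii) U_d ∈ ℝ^{n×d}, u_{d+1} ∈ ℝⁿ, H_d ∈ ℝ^{d×d}, h_{d+1,d} ∈ ℝ satisfy A U_d = U_d H_d + h_{d+1,d} u_{d+1} e_d^T; (iii) U_d = 𝒰_d 𝒯_d with 𝒯_d ∈ ℝ^{d×d} upper triangular and invertible, and let τ̂_d denote the (d,d) entry of 𝒯_d. Then for every r ∈ ℝ^d, 𝒯_d (H_d + r e_d^T) 𝒯_d^{-1} = ℋ_d + r̂ e_d^T, where r̂ := (𝒯_d r − h_{d+1,d} 𝒰_d^T u_{d+1}) / τ̂_d. In particular (r = 0), 𝒯_d H_d 𝒯_d^{-1} = ℋ_d − (h_{d+1,d}/τ̂_d) 𝒰_d^T u_{d+1} e_d^T. -/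

import Mathlib

open Matrix

section aux
variable {d : ℕ}

lemma mul_vecMulVec' {m k : ℕ} (M : Matrix (Fin m) (Fin k) ℝ) (x : Fin k → ℝ)
    (y : Fin (d+1) → ℝ) : M * vecMulVec x y = vecMulVec (M.mulVec x) y := by
  ext i j
  simp [mul_apply, vecMulVec_apply, mulVec, dotProduct, Finset.sum_mul, mul_assoc]

lemma vecMulVec_mul' {m k : ℕ} (x : Fin m → ℝ) (y : Fin (d+1) → ℝ)
    (M : Matrix (Fin (d+1)) (Fin k) ℝ) :
    vecMulVec x y * M = vecMulVec x (vecMul y M) := by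
  ext i j
  simp [mul_apply, vecMulVec_apply, vecMul, dotProduct, Finset.mul_sum, mul_assoc]

lemma vecMulVec_smul_right {m : ℕ} (x : Fin m → ℝ) (c : ℝ) (y : Fin d → ℝ) :
    vecMulVec x (c • y) = c • vecMulVec x y := by
  ext i j; simp [vecMulVec_apply]; ring

lemma vecMulVec_left_lin {m : ℕ} (c : ℝ) (a b : Fin m → ℝ) (y : Fin d → ℝ) :
    vecMulVec (c • (a - b)) y = c • vecMulVec a y - c • vecMulVec b y := by
  ext i j; simp [vecMulVec_apply]; ring

end aux

/-- **Equations (19)–(22).**  Let `cU` have orthonormal columns with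
`ℋ = cUᵀ A cU`, let `A U = U H + h u e_dᵀ`, and let `U = cU cT` with `cT` upper
triangular and invertible with `(d,d)` entry `τ̂`.  Then for every `r`,
`cT (H + r e_dᵀ) cT⁻¹ = ℋ + r̂ e_dᵀ` with `r̂ = (cT r - h cUᵀ u)/τ̂`; in particular
(`r = 0`) `cT H cT⁻¹ = ℋ - (h/τ̂) cUᵀ u e_dᵀ`.  (The paper's `d` is `d+1` here.) -/
theorem similarity_rank_one_modification
    {n d : ℕ}
    (A : Matrix (Fin n) (Fin n) ℝ)
    (cU : Matrix (Fin n) (Fin (d + 1)) ℝ) (hcU : cUᵀ * cU = 1)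
    (U : Matrix (Fin n) (Fin (d + 1)) ℝ) (u : Fin n → ℝ)
    (H : Matrix (Fin (d + 1)) (Fin (d + 1)) ℝ) (h : ℝ)
    (hrel : A * U = U * H + h • vecMulVec u (Pi.single (Fin.last d) 1 : Fin (d + 1) → ℝ))
    (cT : Matrix (Fin (d + 1)) (Fin (d + 1)) ℝ)
    (hcTupper : ∀ i j : Fin (d + 1), j < i → cT i j = 0)
    (hcTdet : cT.det ≠ 0)
    (hU : U = cU * cT) :
    (∀ r : Fin (d + 1) → ℝ,
      cT * (H + vecMulVec r (Pi.single (Fin.last d) 1 : Fin (d + 1) → ℝ)) * cT⁻¹ =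
        cUᵀ * A * cU +
          vecMulVec ((cT (Fin.last d) (Fin.last d))⁻¹ • (cT.mulVec r - h • cUᵀ.mulVec u))
            (Pi.single (Fin.last d) 1 : Fin (d + 1) → ℝ)) ∧
    cT * H * cT⁻¹ =
      cUᵀ * A * cU -
        (h / cT (Fin.last d) (Fin.last d)) •
          vecMulVec (cUᵀ.mulVec u) (Pi.single (Fin.last d) 1 : Fin (d + 1) → ℝ) := by
  set e : Fin (d + 1) → ℝ := Pi.single (Fin.last d) 1 with he
  set τ : ℝ := cT (Fin.last d) (Fin.last d) with hτdef
  have hblock : cT.BlockTriangular id := fun i j hij => hcTupper i j hij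
  have hτ : τ ≠ 0 := by
    have hdet := Matrix.det_of_upperTriangular hblock
    rw [hdet] at hcTdet
    exact fun h0 => hcTdet (Finset.prod_eq_zero (Finset.mem_univ (Fin.last d)) h0)
  have hUnit : IsUnit cT.det := isUnit_iff_ne_zero.2 hcTdet
  have hTinv : cT * cT⁻¹ = 1 := mul_nonsing_inv _ hUnit
  -- last row of cT
  have hrow : vecMul e cT = τ • e := by
    funext j
    by_cases hj : j = Fin.last d
    · subst hj
      simp [vecMul, dotProduct, he, Pi.single_apply, hτdef]
    · have hjlt : j < Fin.last d := lt_of_le_of_ne (Fin.le_last j) hj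
      have : cT (Fin.last d) j = 0 := hcTupper _ _ hjlt
      simp [vecMul, dotProduct, he, Pi.single_apply, hj, this]
  have hrowinv : vecMul e cT⁻¹ = τ⁻¹ • e := by
    have h1 : (τ • e) ᵥ* cT⁻¹ = e := by rw [← hrow, vecMul_vecMul, hTinv, vecMul_one]
    have h2 : τ • (e ᵥ* cT⁻¹) = e := by rw [← smul_vecMul]; exact h1
    calc e ᵥ* cT⁻¹ = τ⁻¹ • (τ • (e ᵥ* cT⁻¹)) := by
          rw [smul_smul, inv_mul_cancel₀ hτ, one_smul]
      _ = τ⁻¹ • e := by rw [h2]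
  have hkey : ∀ x : Fin (d + 1) → ℝ, vecMulVec x e * cT⁻¹ = τ⁻¹ • vecMulVec x e := by
    intro x
    rw [vecMulVec_mul', hrowinv, vecMulVec_smul_right]
  -- ℋ relation
  have hcurly : cUᵀ * A * cU =
      cT * H * cT⁻¹ + (h * τ⁻¹) • vecMulVec (cUᵀ.mulVec u) e := by
    have h1 : cUᵀ * A * cU * cT = cT * H + h • vecMulVec (cUᵀ.mulVec u) e := by
      have h2 : cUᵀ * (A * U) = cUᵀ * (U * H + h • vecMulVec u e) := by rw [hrel]
      have h3 : cUᵀ * U = cT := by rw [hU, ← Matrix.mul_assoc, hcU, Matrix.one_mul]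
      calc cUᵀ * A * cU * cT = cUᵀ * (A * U) := by rw [hU]; simp [Matrix.mul_assoc]
        _ = cUᵀ * (U * H) + h • (cUᵀ * vecMulVec u e) := by
            rw [h2, Matrix.mul_add, Matrix.mul_smul]
        _ = cT * H + h • vecMulVec (cUᵀ.mulVec u) e := by
            rw [← Matrix.mul_assoc, h3, mul_vecMulVec']
    calc cUᵀ * A * cU = cUᵀ * A * cU * (cT * cT⁻¹) := by rw [hTinv, mul_one]
      _ = (cUᵀ * A * cU * cT) * cT⁻¹ := by rw [mul_assoc]
      _ = (cT * H + h • vecMulVec (cUᵀ.mulVec u) e) * cT⁻¹ := by rw [h1]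
      _ = cT * H * cT⁻¹ + (h * τ⁻¹) • vecMulVec (cUᵀ.mulVec u) e := by
          rw [Matrix.add_mul, Matrix.smul_mul, hkey, smul_smul]
  have hCTH : cT * H * cT⁻¹ =
      cUᵀ * A * cU - (h * τ⁻¹) • vecMulVec (cUᵀ.mulVec u) e := by
    rw [hcurly]; abel
  constructor
  · intro r
    have hterm : cT * vecMulVec r e * cT⁻¹ = τ⁻¹ • vecMulVec (cT.mulVec r) e := by
      rw [mul_vecMulVec', hkey]
    calc cT * (H + vecMulVec r e) * cT⁻¹
        = cT * H * cT⁻¹ + cT * vecMulVec r e * cT⁻¹ := by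
          rw [Matrix.mul_add, Matrix.add_mul]
      _ = (cUᵀ * A * cU - (h * τ⁻¹) • vecMulVec (cUᵀ.mulVec u) e) +
            τ⁻¹ • vecMulVec (cT.mulVec r) e := by rw [hCTH, hterm]
      _ = cUᵀ * A * cU + vecMulVec (τ⁻¹ • (cT.mulVec r - h • cUᵀ.mulVec u)) e := by
          rw [vecMulVec_left_lin]
          have : vecMulVec (h • cUᵀ.mulVec u) e = h • vecMulVec (cUᵀ.mulVec u) e := by
            ext i j; simp [vecMulVec_apply]; ring
          rw [this, smul_smul]
          module
  · rw [hCTH, div_eq_mul_inv]
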